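/- Let (L,ρ) be an (R,A)-Lie algebra, M a left L-module and N a right L-module (A-modules with compatible actions). Then N ⊗_A M carries a right L-module structure given by (n ⊗ m)·x = n·x ⊗ m − n ⊗ x·m, i.e. this action is well-defined and satisfies the right-module compatibility conditions m·(ax) = a(m·x) − ρ(x)(a)m and (am)·x = a(m·x) − ρ(x)(a)m. -/

import Mathlib

open scoped TensorProduct

/-- A Lie–Rinehart algebra (an `(R,A)`-Lie algebra). -/
structure LieRinehart (R A L : Type*) [CommRing R] [CommRing A] [Algebra R A]
    [LieRing L] [LieAlgebra R L] [Module A L] where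
  ρ : L →ₗ[A] Derivation R A A
  ρ_lie : ∀ x y : L, ρ ⁅x, y⁆ = ⁅ρ x, ρ y⁆
  leibniz : ∀ (a : A) (x y : L), ⁅x, a • y⁆ = a • ⁅x, y⁆ + (ρ x a) • y

/-- A left module structure over a Lie–Rinehart algebra on an `A`-module `M`. -/
structure IsLRLeftModule {R A L : Type*} [CommRing R] [CommRing A] [Algebra R A]
    [LieRing L] [LieAlgebra R L] [Module A L] (LR : LieRinehart R A L)
    (M : Type*) [AddCommGroup M] [Module A M] (σ : L → M → M) : Prop where
  add_m : ∀ (x : L) (m n : M), σ x (m + n) = σ x m + σ x n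
  add_x : ∀ (x y : L) (m : M), σ (x + y) m = σ x m + σ y m
  smul_x : ∀ (a : A) (x : L) (m : M), σ (a • x) m = a • σ x m
  leibniz : ∀ (x : L) (a : A) (m : M), σ x (a • m) = a • σ x m + (LR.ρ x a) • m
  lie : ∀ (x y : L) (m : M), σ ⁅x, y⁆ m = σ x (σ y m) - σ y (σ x m)

/-- A right module structure over a Lie–Rinehart algebra on an `A`-module `N`:
an action `τ` satisfying `n•(a•x) = a•(n•x) − ρ(x)(a)•n` and
`(a•n)•x = a•(n•x) − ρ(x)(a)•n`. -/
structure IsLRRightModule {R A L : Type*} [CommRing R] [CommRing A] [Algebra R A]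
    [LieRing L] [LieAlgebra R L] [Module A L] (LR : LieRinehart R A L)
    (N : Type*) [AddCommGroup N] [Module A N] (τ : N → L → N) : Prop where
  add_m : ∀ (m n : N) (x : L), τ (m + n) x = τ m x + τ n x
  add_x : ∀ (n : N) (x y : L), τ n (x + y) = τ n x + τ n y
  smul_x : ∀ (n : N) (a : A) (x : L), τ n (a • x) = a • τ n x - (LR.ρ x a) • n
  smul_m : ∀ (a : A) (n : N) (x : L), τ (a • n) x = a • τ n x - (LR.ρ x a) • n
  lie : ∀ (n : N) (x y : L), τ n ⁅x, y⁆ = τ (τ n x) y - τ (τ n y) x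

/-- if `M` is a left `L`-module and `N` a right `L`-module, then
`N ⊗_A M` carries a right `L`-module structure with `(n ⊗ m)•x = n•x ⊗ m − n ⊗ x•m`. -/
theorem tensor_product_right_module {R A L M N : Type*} [CommRing R] [CommRing A]
    [Algebra R A] [LieRing L] [LieAlgebra R L] [Module A L]
    [AddCommGroup M] [Module A M] [AddCommGroup N] [Module A N]
    (LR : LieRinehart R A L) (σ : L → M → M) (τ : N → L → N)
    (hσ : IsLRLeftModule LR M σ) (hτ : IsLRRightModule LR N τ) :
    ∃ act : (N ⊗[A] M) → L → (N ⊗[A] M),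
      (∀ (n : N) (m : M) (x : L), act (n ⊗ₜ m) x = (τ n x) ⊗ₜ m - n ⊗ₜ (σ x m)) ∧
      IsLRRightModule LR (N ⊗[A] M) act := by
  obtain ⟨hτadd_m, hτadd_x, hτsmul_x, hτsmul_m, hτlie⟩ := hτ
  obtain ⟨hσadd_m, hσadd_x, hσsmul_x, hσleib, hσlie⟩ := hσ
  have hσ0 : ∀ x, σ x 0 = 0 := fun x => by
    have h := hσadd_m x 0 0; rw [add_zero] at h; exact (left_eq_add.mp h)
  have hτ0 : ∀ x, τ 0 x = 0 := fun x => by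
    have h := hτadd_m 0 0 x; rw [add_zero] at h; exact (left_eq_add.mp h)
  let f : L → N →+ M →+ (N ⊗[A] M) := fun x =>
    { toFun := fun n =>
        { toFun := fun m => (τ n x) ⊗ₜ m - n ⊗ₜ (σ x m)
          map_zero' := by simp [hσ0]
          map_add' := fun m₁ m₂ => by
            rw [hσadd_m, TensorProduct.tmul_add, TensorProduct.tmul_add]; abel }
      map_zero' := by ext m; simp [hτ0]
      map_add' := fun n₁ n₂ => by
        ext m
        dsimp only [AddMonoidHom.coe_mk, ZeroHom.coe_mk, AddMonoidHom.add_apply]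
        rw [hτadd_m, TensorProduct.add_tmul, TensorProduct.add_tmul]; abel }
  have hbal : ∀ (x : L) (a : A) (n : N) (m : M), f x (a • n) m = f x n (a • m) := by
    intro x a n m
    dsimp only [f, AddMonoidHom.coe_mk, ZeroHom.coe_mk]
    rw [hτsmul_m, hσleib]
    simp only [TensorProduct.sub_tmul, TensorProduct.tmul_add, ← TensorProduct.smul_tmul',
      TensorProduct.tmul_smul, smul_sub, smul_add]
    abel
  let D : L → (N ⊗[A] M) →+ (N ⊗[A] M) := fun x =>
    TensorProduct.liftAddHom (f x) (fun a n m => hbal x a n m)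
  have hD : ∀ (n : N) (m : M) (x : L), D x (n ⊗ₜ m) = (τ n x) ⊗ₜ m - n ⊗ₜ (σ x m) :=
    fun n m x => TensorProduct.liftAddHom_tmul _ _ n m
  refine ⟨fun t x => D x t, fun n m x => hD n m x, ?_, ?_, ?_, ?_, ?_⟩
  · intro s t x; exact (D x).map_add s t
  · intro t x y
    induction t using TensorProduct.induction_on with
    | zero => simp
    | tmul n m =>
        rw [hD, hD, hD, hτadd_x, hσadd_x, TensorProduct.add_tmul, TensorProduct.tmul_add]
        abel
    | add s t hs ht => rw [(D _).map_add, (D _).map_add, (D _).map_add, hs, ht]; abel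
  · intro t a x
    induction t using TensorProduct.induction_on with
    | zero => simp
    | tmul n m =>
        rw [hD, hD, hτsmul_x, hσsmul_x]
        simp only [TensorProduct.sub_tmul, TensorProduct.tmul_sub, TensorProduct.tmul_add,
          ← TensorProduct.smul_tmul', TensorProduct.tmul_smul, smul_sub, smul_add]
        abel
    | add s t hs ht =>
        rw [(D _).map_add, (D _).map_add, hs, ht, smul_add, smul_add]; abel
  · intro a t x
    induction t using TensorProduct.induction_on with
    | zero => simp
    | tmul n m =>
        rw [TensorProduct.smul_tmul', hD, hD, hτsmul_m]
        simp only [TensorProduct.sub_tmul, ← TensorProduct.smul_tmul',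
          TensorProduct.tmul_smul, smul_sub, smul_add]
        abel
    | add s t hs ht =>
        rw [smul_add, (D _).map_add, (D _).map_add, hs, ht, smul_add, smul_add]; abel
  · intro t x y
    induction t using TensorProduct.induction_on with
    | zero => simp
    | tmul n m =>
        rw [hD, hD n m x, hD n m y, (D y).map_sub, (D x).map_sub, hD, hD, hD, hD, hτlie, hσlie,
          TensorProduct.sub_tmul, TensorProduct.tmul_sub]
        abel
    | add s t hs ht =>
        rw [(D _).map_add, hs, ht, (D _).map_add, (D _).map_add, (D _).map_add,
          (D _).map_add]
        abel
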